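/- arXiv:2102.12447 — 2 statements merged into one kernel-verified Lean document; each statement's English description precedes it below -/
import Mathlib

section
/- Let n ≥ 4 be an integer and m > 0 a real number. The function F(r) = (1 + m/(2r^(n-2)))^((n-3)/(n-2)) satisfies, for every r > 0, the identity ((n-1)/(n-3))·F(r)^(-1)·( F''(r) + ((n-2)/r)·F'(r) ) = 2(n-1)·m·r^(n-4)/(m + 2r^(n-2))². -/
open Real

/-- The radial conformal factor `F(r) = (1 + m/(2 r^(n-2)))^((n-3)/(n-2))` relating the
induced cone metric in the Schwarzschild space to the Euclidean cone metric. -/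
noncomputable def coneConfFactor (n : ℕ) (m : ℝ) : ℝ → ℝ :=
  fun r => (1 + m / (2 * r ^ (n - 2))) ^ (((n : ℝ) - 3) / ((n : ℝ) - 2))

noncomputable def Fk (k : ℕ) (m : ℝ) : ℝ → ℝ :=
  fun r => (1 + m / (2 * r ^ k)) ^ (((k:ℝ) - 1) / (k:ℝ))

noncomputable def Gk (k : ℕ) (m : ℝ) : ℝ → ℝ :=
  fun x => (-(((k:ℝ) - 1) * m) / 2) *
    ((x ^ (k+1))⁻¹ * (1 + m / (2 * x ^ k)) ^ (-(1:ℝ) / (k:ℝ)))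

lemma uk_pos (k : ℕ) (m : ℝ) (hm : 0 < m) (x : ℝ) (hx : 0 < x) :
    0 < 1 + m / (2 * x ^ k) := by
  have : 0 < m / (2 * x ^ k) := by positivity
  linarith

lemma uk_deriv (k : ℕ) (hk : 2 ≤ k) (m : ℝ) (x : ℝ) (hx : 0 < x) :
    HasDerivAt (fun x : ℝ => 1 + m / (2 * x ^ k)) (-(m * k) / (2 * x ^ (k+1))) x := by
  have h1 : HasDerivAt (fun x : ℝ => 2 * x ^ k) (2 * (↑k * x ^ (k-1))) x :=
    (hasDerivAt_pow k x).const_mul 2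
  have h2 := ((h1.inv (by positivity)).const_mul m).const_add 1
  have hxk : x ^ k = x ^ (k-1) * x := by
    rw [← pow_succ]; congr 1; omega
  have hxk1 : x ^ (k+1) = x ^ (k-1) * x * x := by
    rw [← pow_succ, ← pow_succ]; congr 1; omega
  have heq : (fun x : ℝ => 1 + m / (2 * x ^ k)) = (fun x : ℝ => 1 + m * (2 * x ^ k)⁻¹) := by
    funext y; rw [div_eq_mul_inv]
  rw [heq]
  refine h2.congr_deriv ?_
  rw [hxk, hxk1]
  have hy : x ^ (k-1) ≠ 0 := pow_ne_zero _ hx.ne'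
  field_simp

lemma Fk_deriv (k : ℕ) (hk : 2 ≤ k) (m : ℝ) (hm : 0 < m) (x : ℝ) (hx : 0 < x) :
    HasDerivAt (Fk k m) (Gk k m x) x := by
  have hA := uk_pos k m hm x hx
  have h := (uk_deriv k hk m x hx).rpow_const (p := ((k:ℝ) - 1) / (k:ℝ)) (Or.inl hA.ne')
  have hkR : (k:ℝ) ≠ 0 := by positivity
  have hexp : ((k:ℝ) - 1) / (k:ℝ) - 1 = -(1:ℝ) / (k:ℝ) := by field_simp; ring
  refine h.congr_deriv ?_
  rw [hexp]
  unfold Gk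
  have hxk1 : (x : ℝ) ^ (k+1) ≠ 0 := pow_ne_zero _ hx.ne'
  field_simp

lemma key (k : ℕ) (hk : 2 ≤ k) (m : ℝ) (hm : 0 < m) (r : ℝ) (hr : 0 < r) :
    (((k:ℝ) + 1) / ((k:ℝ) - 1)) * (Fk k m r)⁻¹ *
        (deriv (deriv (Fk k m)) r + (((k:ℝ)) / r) * deriv (Fk k m) r)
      = 2 * ((k:ℝ) + 1) * m * r ^ (k-2) / (m + 2 * r ^ k) ^ 2 := by
  have hA := uk_pos k m hm r hr
  have hkR : (k:ℝ) ≠ 0 := by positivity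
  -- deriv Fk = Gk near r
  have hd1 : ∀ x ∈ Set.Ioi (0:ℝ), deriv (Fk k m) x = Gk k m x := fun x hx =>
    (Fk_deriv k hk m hm x hx).deriv
  have hev : deriv (Fk k m) =ᶠ[nhds r] Gk k m :=
    Filter.eventuallyEq_of_mem (isOpen_Ioi.mem_nhds hr) hd1
  -- derivative of Gk at r
  have hG : HasDerivAt (Gk k m)
      ((-(((k:ℝ) - 1) * m) / 2) *
        ((-(↑(k+1) * r ^ (k+1-1)) / (r ^ (k+1)) ^ 2) *
            (1 + m / (2 * r ^ k)) ^ (-(1:ℝ) / (k:ℝ)) +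
          (r ^ (k+1))⁻¹ *
            (-(m * k) / (2 * r ^ (k+1)) * (-(1:ℝ) / (k:ℝ)) *
              (1 + m / (2 * r ^ k)) ^ (-(1:ℝ) / (k:ℝ) - 1)))) r := by
    exact (((hasDerivAt_pow (k+1) r).inv (pow_ne_zero _ hr.ne')).mul
      ((uk_deriv k hk m r hr).rpow_const (Or.inl hA.ne'))).const_mul _
  have hd2 : deriv (deriv (Fk k m)) r = deriv (Gk k m) r := hev.deriv_eq
  rw [hd2, hG.deriv, hd1 r hr]
  -- exponent rewrites
  set A : ℝ := 1 + m / (2 * r ^ k) with hAdef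
  have hb1 : A ^ (-(1:ℝ) / (k:ℝ)) = A ^ (((k:ℝ) - 1) / (k:ℝ)) / A := by
    rw [show (-(1:ℝ) / (k:ℝ)) = ((k:ℝ) - 1) / (k:ℝ) - 1 by field_simp; ring,
      Real.rpow_sub hA, Real.rpow_one]
  have hb2 : A ^ (-(1:ℝ) / (k:ℝ) - 1) = A ^ (((k:ℝ) - 1) / (k:ℝ)) / A / A := by
    rw [show (-(1:ℝ) / (k:ℝ) - 1) = ((k:ℝ) - 1) / (k:ℝ) - 1 - 1 by field_simp; ring,
      Real.rpow_sub hA, Real.rpow_sub hA, Real.rpow_one]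
  unfold Fk Gk
  rw [← hAdef, hb1, hb2]
  set B : ℝ := A ^ (((k:ℝ) - 1) / (k:ℝ)) with hBdef
  have hB : 0 < B := Real.rpow_pos_of_pos hA _
  -- power rewrites
  have e1 : r ^ k = r ^ (k-2) * r ^ 2 := by rw [← pow_add]; congr 1; omega
  have e2 : r ^ (k+1) = r ^ (k-2) * r ^ 3 := by rw [← pow_add]; congr 1; omega
  have e3 : (k:ℝ) + 1 - 1 = (k:ℝ) := by ring
  have hAval : A = 1 + m / (2 * (r ^ (k-2) * r ^ 2)) := by rw [hAdef, e1]
  have hk1 : (k:ℝ) - 1 ≠ 0 := by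
    have : (2:ℝ) ≤ (k:ℝ) := by exact_mod_cast hk
    linarith
  have hy : (0:ℝ) < r ^ (k-2) := pow_pos hr _
  have hApos := hA
  rw [hAval] at hApos ⊢
  have hMpos : (0:ℝ) < m + 2 * (r ^ (k-2) * r ^ 2) := by positivity
  simp only [Nat.add_sub_cancel]
  rw [e1, e2]
  push_cast
  field_simp
  ring

/-- for `n ≥ 4`, `m > 0` and every `r > 0`,
`((n-1)/(n-3)) F(r)⁻¹ (F''(r) + ((n-2)/r) F'(r)) = 2 (n-1) m r^(n-4)/(m + 2 r^(n-2))^2`. -/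
theorem coneConfFactor_laplacian (n : ℕ) (hn : 4 ≤ n) (m : ℝ) (hm : 0 < m)
    (r : ℝ) (hr : 0 < r) :
    (((n : ℝ) - 1) / ((n : ℝ) - 3)) * (coneConfFactor n m r)⁻¹ *
        (deriv (deriv (coneConfFactor n m)) r +
          (((n : ℝ) - 2) / r) * deriv (coneConfFactor n m) r)
      = 2 * ((n : ℝ) - 1) * m * r ^ (n - 4) / (m + 2 * r ^ (n - 2)) ^ 2 := by
  have hk : 2 ≤ n - 2 := by omega
  have h2 : 2 ≤ n := by omega
  have hcast : ((n - 2 : ℕ) : ℝ) = (n : ℝ) - 2 := by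
    rw [Nat.cast_sub h2]; norm_num
  have hF : coneConfFactor n m = Fk (n - 2) m := by
    funext x
    unfold coneConfFactor Fk
    rw [hcast, show (n:ℝ) - 2 - 1 = (n:ℝ) - 3 by ring]
  have h := key (n - 2) hk m hm r hr
  rw [hcast, show n - 2 - 2 = n - 4 by omega] at h
  rw [hF]
  ring_nf at h ⊢
  exact h
end

section
/- Let n ≥ 2 be an integer, R₀ > 0, and let q : [R₀,∞) → ℝ be continuous. Suppose u : [R₀,∞) → ℝ is twice continuously differentiable, positive, satisfies u'(R₀) ≤ 0, and u''(r) + ((n−2)/r)·u'(r) + q(r)·u(r) ≤ 0 for all r ≥ R₀. Then for every continuously differentiable function φ : [R₀,∞) → ℝ with compact support, ∫_{R₀}^{∞} ( φ'(r)² − q(r)·φ(r)² )·r^(n−2) dr ≥ 0. -/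
open Real MeasureTheory Set

/-- radial Fischer–Colbrie criterion: let `n ≥ 2`, `R₀ > 0`, `q` continuous
on `[R₀,∞)`, and let `u` be a positive, twice continuously differentiable function on
`[R₀,∞)` with `u'(R₀) ≤ 0` satisfying `u'' + ((n-2)/r) u' + q u ≤ 0` on `[R₀,∞)`. Then for
every continuously differentiable `φ : [R₀,∞) → ℝ` with compact support,
`∫_{R₀}^∞ (φ'(r)² - q(r) φ(r)²) r^(n-2) dr ≥ 0`. -/
theorem radial_fischer_colbrie (n : ℕ) (hn : 2 ≤ n) (R₀ : ℝ) (hR₀ : 0 < R₀)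
    (q : ℝ → ℝ) (hq : ContinuousOn q (Set.Ici R₀))
    (u : ℝ → ℝ) (hu : ContDiffOn ℝ 2 u (Set.Ici R₀))
    (hupos : ∀ r ∈ Set.Ici R₀, 0 < u r)
    (hu' : derivWithin u (Set.Ici R₀) R₀ ≤ 0)
    (hode : ∀ r ∈ Set.Ici R₀,
      derivWithin (derivWithin u (Set.Ici R₀)) (Set.Ici R₀) r +
        (((n : ℝ) - 2) / r) * derivWithin u (Set.Ici R₀) r + q r * u r ≤ 0) :
    ∀ φ : ℝ → ℝ, ContDiffOn ℝ 1 φ (Set.Ici R₀) →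
      (∃ R₁ : ℝ, ∀ r : ℝ, R₁ ≤ r → φ r = 0) →
      0 ≤ ∫ r in Set.Ioi R₀, (deriv φ r ^ 2 - q r * φ r ^ 2) * r ^ (n - 2) := by
  intro φ hφ hsupp
  obtain ⟨R₁', hR₁'⟩ := hsupp
  set m : ℕ := n - 2 with hm
  have hmcast : ((m : ℝ)) = (n : ℝ) - 2 := by
    rw [hm, Nat.cast_sub hn]; norm_num
  set R₁ : ℝ := max R₁' (R₀ + 1) with hR₁def
  have hab : R₀ ≤ R₁ := le_trans (by linarith) (le_max_right _ _)
  have hφ0 : ∀ r, R₁ ≤ r → φ r = 0 := fun r hr => hR₁' r (le_trans (le_max_left _ _) hr)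
  set v := derivWithin u (Set.Ici R₀) with hv
  set a := derivWithin v (Set.Ici R₀) with ha
  set ψ := derivWithin φ (Set.Ici R₀) with hψ
  have hUD : UniqueDiffOn ℝ (Set.Ici R₀) := uniqueDiffOn_Ici R₀
  have hvC : ContDiffOn ℝ 1 v (Set.Ici R₀) := hu.derivWithin hUD (by norm_num)
  have hvcont : ContinuousOn v (Set.Ici R₀) := hvC.continuousOn
  have hacont : ContinuousOn a (Set.Ici R₀) := hvC.continuousOn_derivWithin hUD le_rfl
  have hψcont : ContinuousOn ψ (Set.Ici R₀) := hφ.continuousOn_derivWithin hUD le_rfl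
  have hucont : ContinuousOn u (Set.Ici R₀) := hu.continuousOn
  have hφcont : ContinuousOn φ (Set.Ici R₀) := hφ.continuousOn
  have hne : ∀ r ∈ Set.Ici R₀, u r ≠ 0 := fun r hr => (hupos r hr).ne'
  have hrne : ∀ r ∈ Set.Ici R₀, r ≠ 0 := fun r hr => (lt_of_lt_of_le hR₀ hr).ne'
  set g : ℝ → ℝ := fun r => (ψ r ^ 2 - q r * φ r ^ 2) * r ^ m with hg
  set F : ℝ → ℝ := fun r => v r / u r * φ r ^ 2 * r ^ m with hF
  set G : ℝ → ℝ := fun r => (a r / u r - (v r / u r) ^ 2) * φ r ^ 2 * r ^ m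
      + v r / u r * (2 * φ r * ψ r) * r ^ m
      + v r / u r * φ r ^ 2 * ((m : ℝ) / r * r ^ m) with hGdef
  -- pointwise derivative facts at interior points
  have hu_at : ∀ r, R₀ < r → HasDerivAt u (v r) r := by
    intro r hr
    have h1 : DifferentiableAt ℝ u r :=
      (hu.differentiableOn (by norm_num)).differentiableAt (Ici_mem_nhds hr)
    have h2 := h1.hasDerivAt
    rwa [hv, derivWithin_of_mem_nhds (Ici_mem_nhds hr)]
  have hv_at : ∀ r, R₀ < r → HasDerivAt v (a r) r := by
    intro r hr
    have h1 : DifferentiableAt ℝ v r :=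
      (hvC.differentiableOn (by norm_num)).differentiableAt (Ici_mem_nhds hr)
    have h2 := h1.hasDerivAt
    rwa [ha, derivWithin_of_mem_nhds (Ici_mem_nhds hr)]
  have hφ_at : ∀ r, R₀ < r → HasDerivAt φ (ψ r) r := by
    intro r hr
    have h1 : DifferentiableAt ℝ φ r :=
      (hφ.differentiableOn (by norm_num)).differentiableAt (Ici_mem_nhds hr)
    have h2 := h1.hasDerivAt
    rwa [hψ, derivWithin_of_mem_nhds (Ici_mem_nhds hr)]
  have hpow_at : ∀ r : ℝ, r ≠ 0 → HasDerivAt (fun x : ℝ => x ^ m) ((m : ℝ) / r * r ^ m) r := by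
    intro r hr
    have h := hasDerivAt_pow m r
    refine h.congr_deriv ?_
    rcases Nat.eq_zero_or_pos m with h0 | h1
    · have h0' : (m : ℝ) = 0 := by exact_mod_cast h0
      rw [h0']; simp
    · have hpow : r ^ (m - 1) * r = r ^ m := by
        rw [← pow_succ, Nat.sub_add_cancel h1]
      rw [← hpow, div_mul_eq_mul_div, eq_div_iff hr]; ring
  have hF_at : ∀ r, R₀ < r → HasDerivAt F (G r) r := by
    intro r hr
    have hrpos : 0 < r := lt_trans hR₀ hr
    have hune : u r ≠ 0 := (hupos r hr.le).ne'
    have h1 : HasDerivAt (fun x => v x / u x) ((a r * u r - v r * v r) / (u r) ^ 2) r :=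
      (hv_at r hr).div (hu_at r hr) hune
    have h2 : HasDerivAt (fun x => φ x ^ 2) (2 * φ r * ψ r) r := by
      have := (hφ_at r hr).pow 2
      exact HasDerivAt.congr_deriv (f := fun x => φ x ^ 2) this (by norm_num)
    have h3 := (h1.mul h2).mul (hpow_at r hrpos.ne')
    refine HasDerivAt.congr_deriv (f := F) h3 ?_
    simp only [hGdef, Pi.mul_apply]
    field_simp
  -- the pointwise inequality G ≤ g on [R₀, R₁]
  have hGle : ∀ r ∈ Set.Icc R₀ R₁, G r ≤ g r := by
    intro r hr
    have hrIci : r ∈ Set.Ici R₀ := hr.1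
    have hrpos : 0 < r := lt_of_lt_of_le hR₀ hr.1
    have hupr := hupos r hrIci
    have h1 : a r + (m : ℝ) / r * v r + q r * u r ≤ 0 := by
      have h := hode r hrIci
      rw [← hmcast] at h
      linarith
    have h2 : a r / u r + (m : ℝ) / r * (v r / u r) + q r ≤ 0 := by
      have h3 : a r / u r + (m : ℝ) / r * (v r / u r) + q r
          = (a r + (m : ℝ) / r * v r + q r * u r) / u r := by
        field_simp
      rw [h3]
      exact div_nonpos_of_nonpos_of_nonneg h1 hupr.le
    have key : g r - G r = (ψ r - v r / u r * φ r) ^ 2 * r ^ m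
        + (-(q r) - a r / u r - (m : ℝ) / r * (v r / u r)) * (φ r ^ 2 * r ^ m) := by
      simp only [hg, hGdef]
      ring
    have t1 : 0 ≤ (ψ r - v r / u r * φ r) ^ 2 * r ^ m :=
      mul_nonneg (sq_nonneg _) (pow_nonneg hrpos.le m)
    have t2 : 0 ≤ (-(q r) - a r / u r - (m : ℝ) / r * (v r / u r)) * (φ r ^ 2 * r ^ m) :=
      mul_nonneg (by linarith) (mul_nonneg (sq_nonneg _) (pow_nonneg hrpos.le m))
    have hkey : 0 ≤ g r - G r := by rw [key]; exact add_nonneg t1 t2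
    linarith
  -- continuity
  have hwcont : ContinuousOn (fun r => v r / u r) (Set.Ici R₀) := hvcont.div hucont hne
  have hFcont : ContinuousOn F (Set.Ici R₀) :=
    (hwcont.mul (hφcont.pow 2)).mul (continuous_pow m).continuousOn
  have hGcont : ContinuousOn G (Set.Ici R₀) := by
    apply ContinuousOn.add
    apply ContinuousOn.add
    · exact (((hacont.div hucont hne).sub (hwcont.pow 2)).mul (hφcont.pow 2)).mul
        (continuous_pow m).continuousOn
    · exact (hwcont.mul ((continuousOn_const.mul hφcont).mul hψcont)).mul
        (continuous_pow m).continuousOn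
    · exact (hwcont.mul (hφcont.pow 2)).mul
        ((continuousOn_const.div continuousOn_id hrne).mul (continuous_pow m).continuousOn)
  have hgcont : ContinuousOn g (Set.Ici R₀) :=
    ((hψcont.pow 2).sub (hq.mul (hφcont.pow 2))).mul (continuous_pow m).continuousOn
  have hIccsub : Set.Icc R₀ R₁ ⊆ Set.Ici R₀ := Set.Icc_subset_Ici_self
  have hGint : IntervalIntegrable G volume R₀ R₁ :=
    ContinuousOn.intervalIntegrable_of_Icc hab (hGcont.mono hIccsub)
  have hgint : IntervalIntegrable g volume R₀ R₁ :=
    ContinuousOn.intervalIntegrable_of_Icc hab (hgcont.mono hIccsub)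
  -- FTC
  have hFTC : ∫ r in R₀..R₁, G r = F R₁ - F R₀ :=
    intervalIntegral.integral_eq_sub_of_hasDeriv_right_of_le hab (hFcont.mono hIccsub)
      (fun x hx => (hF_at x hx.1).hasDerivWithinAt) hGint
  have hFR₁ : F R₁ = 0 := by
    simp only [hF]
    rw [hφ0 R₁ le_rfl]
    ring
  have hFR₀ : F R₀ ≤ 0 := by
    have h1 : v R₀ / u R₀ ≤ 0 := div_nonpos_of_nonpos_of_nonneg hu' (hupos R₀ Set.self_mem_Ici).le
    have h2 : 0 ≤ φ R₀ ^ 2 * R₀ ^ m := mul_nonneg (sq_nonneg _) (pow_nonneg hR₀.le m)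
    simp only [hF]
    calc v R₀ / u R₀ * φ R₀ ^ 2 * R₀ ^ m = v R₀ / u R₀ * (φ R₀ ^ 2 * R₀ ^ m) := by ring
    _ ≤ 0 := mul_nonpos_of_nonpos_of_nonneg h1 h2
  have hGpos : 0 ≤ ∫ r in R₀..R₁, G r := by
    rw [hFTC, hFR₁]
    linarith
  have hmono : (∫ r in R₀..R₁, G r) ≤ ∫ r in R₀..R₁, g r :=
    intervalIntegral.integral_mono_on hab hGint hgint hGle
  have hgpos : 0 ≤ ∫ r in R₀..R₁, g r := le_trans hGpos hmono
  -- g vanishes past R₁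
  have hg0 : Set.EqOn g (fun _ => (0 : ℝ)) (Set.Ioi R₁) := by
    intro r hr
    have hr' : R₁ < r := hr
    have hφr : φ r = 0 := hφ0 r hr'.le
    have hψr : ψ r = 0 := by
      have hd : deriv φ r = 0 := by
        have hev : φ =ᶠ[nhds r] fun _ => (0 : ℝ) := by
          filter_upwards [Ioi_mem_nhds hr'] with x hx
          exact hφ0 x (le_of_lt hx)
        rw [hev.deriv_eq]
        simp
      rw [hψ, derivWithin_of_mem_nhds (Ici_mem_nhds (lt_of_le_of_lt hab hr'))]
      exact hd
    simp [hg, hφr, hψr]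
  have hint1 : IntegrableOn g (Set.Ioc R₀ R₁) volume :=
    ((hgcont.mono hIccsub).integrableOn_Icc).mono_set Set.Ioc_subset_Icc_self
  have hint2 : IntegrableOn g (Set.Ioi R₁) volume :=
    (integrableOn_congr_fun hg0 measurableSet_Ioi).mpr (integrableOn_zero)
  have hzero2 : ∫ r in Set.Ioi R₁, g r = 0 := by
    rw [setIntegral_congr_fun measurableSet_Ioi hg0]
    simp
  have hsplit : ∫ r in Set.Ioi R₀, g r = (∫ r in Set.Ioc R₀ R₁, g r) + ∫ r in Set.Ioi R₁, g r := by
    rw [← Set.Ioc_union_Ioi_eq_Ioi hab]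
    exact setIntegral_union (Set.Ioc_disjoint_Ioi le_rfl) measurableSet_Ioi hint1 hint2
  have heq : Set.EqOn (fun r => (deriv φ r ^ 2 - q r * φ r ^ 2) * r ^ m) g (Set.Ioi R₀) := by
    intro r hr
    simp only [hg, hψ]
    rw [derivWithin_of_mem_nhds (Ici_mem_nhds hr)]
  calc (0 : ℝ) ≤ ∫ r in R₀..R₁, g r := hgpos
  _ = ∫ r in Set.Ioc R₀ R₁, g r := intervalIntegral.integral_of_le hab
  _ = ∫ r in Set.Ioi R₀, g r := by rw [hsplit, hzero2, add_zero]
  _ = ∫ r in Set.Ioi R₀, (deriv φ r ^ 2 - q r * φ r ^ 2) * r ^ m :=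
    (setIntegral_congr_fun measurableSet_Ioi heq).symm
end
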